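/- Let h = (1/2)√(1+√5), N = 2/√(5+√5), and for i = 0,...,4 define vectors v_i = N(cos(2πi/5), sin(2πi/5), h) in ℝ³. Then each v_i is a unit vector, and v_i is orthogonal to v_j whenever i - j ≡ ±2 (mod 5). -/

import Mathlib

/-- Height of the pentagonal pyramid. -/
noncomputable def pyrH : ℝ := (1/2) * Real.sqrt (1 + Real.sqrt 5)

/-- Normalization constant. -/
noncomputable def pyrN : ℝ := 2 / Real.sqrt (5 + Real.sqrt 5)

/-- The Pyramid vectors in ℝ³. -/
noncomputable def pyrV (i : Fin 5) : EuclideanSpace ℝ (Fin 3) :=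
  !₂[pyrN * Real.cos (2 * Real.pi * (i : ℕ) / 5),
    pyrN * Real.sin (2 * Real.pi * (i : ℕ) / 5),
    pyrN * pyrH]

lemma sqrt5_nonneg : (0:ℝ) ≤ Real.sqrt 5 := Real.sqrt_nonneg 5

lemma pyrH_sq : pyrH ^ 2 = (1 + Real.sqrt 5) / 4 := by
  have h : (0:ℝ) ≤ 1 + Real.sqrt 5 := by linarith [sqrt5_nonneg]
  rw [pyrH, mul_pow, Real.sq_sqrt h]; ring

lemma pyrN_sq : pyrN ^ 2 = 4 / (5 + Real.sqrt 5) := by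
  have h : (0:ℝ) ≤ 5 + Real.sqrt 5 := by linarith [sqrt5_nonneg]
  rw [pyrN, div_pow, Real.sq_sqrt h]; norm_num

lemma key (a b : ℝ) (hab : Real.cos (a - b) = -((1 + Real.sqrt 5)/4)) :
    pyrN * Real.cos a * (pyrN * Real.cos b) +
      pyrN * Real.sin a * (pyrN * Real.sin b) + pyrN * pyrH * (pyrN * pyrH) = 0 := by
  have h5 : (0:ℝ) < 5 + Real.sqrt 5 := by linarith [sqrt5_nonneg]
  have e : pyrN * Real.cos a * (pyrN * Real.cos b) +
      pyrN * Real.sin a * (pyrN * Real.sin b) + pyrN * pyrH * (pyrN * pyrH)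
      = pyrN ^ 2 * (Real.cos (a - b) + pyrH ^ 2) := by
    rw [Real.cos_sub]; ring
  rw [e, hab, pyrH_sq, pyrN_sq]; ring

lemma cos45 : Real.cos (4 * Real.pi / 5) = -((1 + Real.sqrt 5)/4) := by
  rw [show (4 * Real.pi / 5 : ℝ) = Real.pi - Real.pi / 5 by ring, Real.cos_pi_sub,
    Real.cos_pi_div_five]

lemma cos65 : Real.cos (6 * Real.pi / 5) = -((1 + Real.sqrt 5)/4) := by
  rw [show (6 * Real.pi / 5 : ℝ) = Real.pi + Real.pi / 5 by ring, Real.cos_add, Real.cos_pi, Real.sin_pi, Real.cos_pi_div_five]; ring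


lemma cosd (x : ℝ) (h : x = 4*Real.pi/5 ∨ x = 6*Real.pi/5 ∨ x = -(4*Real.pi/5) ∨ x = -(6*Real.pi/5)) :
    Real.cos x = -((1 + Real.sqrt 5)/4) := by
  rcases h with h | h | h | h <;> subst h
  · exact cos45
  · exact cos65
  · rw [Real.cos_neg]; exact cos45
  · rw [Real.cos_neg]; exact cos65

theorem stmt0 :
    (∀ i : Fin 5, ‖pyrV i‖ = 1) ∧
    (∀ i j : Fin 5, (((i : ℕ) + 2) % 5 = (j : ℕ) ∨ ((j : ℕ) + 2) % 5 = (i : ℕ)) →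
      (inner ℝ (pyrV i) (pyrV j) : ℝ) = 0) := by
  have h5 : (0:ℝ) < 5 + Real.sqrt 5 := by linarith [sqrt5_nonneg]
  constructor
  · intro i
    rw [EuclideanSpace.norm_eq]
    simp only [pyrV, PiLp.toLp_apply, Fin.sum_univ_three, Matrix.cons_val_zero, Matrix.cons_val_one,
      Matrix.head_cons, Matrix.cons_val_two, Matrix.tail_cons, Real.norm_eq_abs, sq_abs]
    have e : (pyrN * Real.cos (2 * Real.pi * (i:ℕ) / 5)) ^ 2 +
        (pyrN * Real.sin (2 * Real.pi * (i:ℕ) / 5)) ^ 2 + (pyrN * pyrH) ^ 2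
        = pyrN ^ 2 * (1 + pyrH ^ 2) := by
      rw [← Real.sin_sq_add_cos_sq (2 * Real.pi * (i:ℕ) / 5)]; ring
    rw [e, pyrN_sq, pyrH_sq]
    rw [show (4:ℝ) / (5 + Real.sqrt 5) * (1 + (1 + Real.sqrt 5)/4) = 1 by
      field_simp; ring]
    exact Real.sqrt_one
  · intro i j hij
    fin_cases i <;> fin_cases j <;>
      (try simp only [Fin.isValue, Fin.val_mk, Nat.cast_ofNat, Nat.cast_zero, Nat.cast_one] at hij ⊢) <;>
      first
        | omega
        | (simp only [pyrV, PiLp.toLp_apply, PiLp.inner_apply, RCLike.inner_apply, conj_trivial,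
            Fin.sum_univ_three, Matrix.cons_val_zero, Matrix.cons_val_one, Matrix.head_cons,
            Matrix.cons_val_two, Matrix.tail_cons]
           apply key
           apply cosd
           push_cast
           first
             | (left; ring1) | (right; left; ring1)
             | (right; right; left; ring1) | (right; right; right; ring1))
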